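/- arXiv:2104.04653 — 3 statements merged into one kernel-verified Lean document; each statement's English description precedes it below -/
import Mathlib

section
/- For every M > 0 there exists a unique inflection point s* ∈ (0,1) of f: f″(s*) = 0, f″(s) > 0 for all s ∈ [0, s*), and f″(s) < 0 for all s ∈ (s*, 1]. (This is the inflection point that delineates the trust regions in the inflection-point Newton strategy.) -/
/-- For every `M > 0` the Buckley–Leverett fractional flow function
`f s = M s² / (M s² + (1-s)²)` has a unique inflection point `s* ∈ (0,1)`:
`f'' s* = 0`, `f'' s > 0` for all `s ∈ [0, s*)`, and `f'' s < 0` for all `s ∈ (s*, 1]`. -/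
theorem fractional_flow_unique_inflection_point
    (M : ℝ) (hM : 0 < M)
    (f : ℝ → ℝ) (hf : ∀ s, f s = M * s ^ 2 / (M * s ^ 2 + (1 - s) ^ 2)) :
    ∃! sstar : ℝ, sstar ∈ Set.Ioo (0 : ℝ) 1 ∧
      deriv (deriv f) sstar = 0 ∧
      (∀ s ∈ Set.Ico (0 : ℝ) sstar, 0 < deriv (deriv f) s) ∧
      (∀ s ∈ Set.Ioc sstar (1 : ℝ), deriv (deriv f) s < 0) := by
  have hfun : f = fun s => M * s ^ 2 / (M * s ^ 2 + (1 - s) ^ 2) := funext hf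
  set D : ℝ → ℝ := fun s => M * s ^ 2 + (1 - s) ^ 2 with hDdef
  have hD : ∀ s, 0 < D s := by
    intro s
    rcases eq_or_ne s 0 with h | h
    · simp [hDdef, h]
    · have : 0 < M * s ^ 2 := by positivity
      have h2 : 0 ≤ (1 - s) ^ 2 := sq_nonneg _
      simp only [hDdef]; linarith
  have hDd : ∀ s, HasDerivAt D (M * (2 * s) + 2 * (1 - s) * (-1)) s := by
    intro s
    have h1 : HasDerivAt (fun s : ℝ => M * s ^ 2) (M * (2 * s)) s := by
      have := (hasDerivAt_pow 2 s).const_mul M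
      refine this.congr_deriv ?_; push_cast; ring
    have h2 : HasDerivAt (fun s : ℝ => (1 - s) ^ 2) (2 * (1 - s) * (-1)) s := by
      have hb : HasDerivAt (fun s : ℝ => 1 - s) (-1) s := by
        simpa using (hasDerivAt_id s).const_sub 1
      have := hb.pow 2
      refine this.congr_deriv ?_; push_cast; ring
    exact h1.add h2
  have hf1 : deriv f = fun s => 2 * M * (s - s ^ 2) / (D s) ^ 2 := by
    funext s
    have h1 : HasDerivAt (fun s : ℝ => M * s ^ 2) (M * (2 * s)) s := by
      have := (hasDerivAt_pow 2 s).const_mul M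
      refine this.congr_deriv ?_; push_cast; ring
    have hdiv := h1.div (hDd s) (hD s).ne'
    rw [hfun]
    rw [show (fun s => M * s ^ 2 / (M * s ^ 2 + (1 - s) ^ 2)) = (fun s : ℝ => M * s ^ 2) / D from rfl, hdiv.deriv]
    field_simp
    ring
  set g : ℝ → ℝ := fun s => (M + 1) * (2 * s ^ 3 - 3 * s ^ 2) + 1 with hgdef
  have hf2 : ∀ s, deriv (deriv f) s = 2 * M * g s / (D s) ^ 3 := by
    intro s
    rw [hf1]
    have hnum : HasDerivAt (fun s : ℝ => 2 * M * (s - s ^ 2)) (2 * M * (1 - 2 * s)) s := by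
      have h1 : HasDerivAt (fun s : ℝ => s - s ^ 2) (1 - 2 * s) s := by
        have := (hasDerivAt_id s).sub (hasDerivAt_pow 2 s)
        refine this.congr_deriv ?_; push_cast; ring
      have := h1.const_mul (2 * M)
      convert this using 1
    have hden : HasDerivAt (fun s : ℝ => (D s) ^ 2)
        (2 * D s ^ 1 * (M * (2 * s) + 2 * (1 - s) * (-1))) s := (hDd s).pow 2
    have hdiv := hnum.div hden (pow_ne_zero 2 (hD s).ne')
    rw [show (fun s => 2 * M * (s - s ^ 2) / D s ^ 2) = ((fun s : ℝ => 2 * M * (s - s ^ 2)) / fun s => D s ^ 2) from rfl, hdiv.deriv]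
    have hDs := (hD s).ne'
    simp only [hgdef]
    field_simp
    ring
  have hgd : ∀ s, HasDerivAt g ((M + 1) * (6 * s ^ 2 - 6 * s)) s := by
    intro s
    have h3 : HasDerivAt (fun s : ℝ => 2 * s ^ 3 - 3 * s ^ 2) (6 * s ^ 2 - 6 * s) s := by
      have := ((hasDerivAt_pow 3 s).const_mul 2).sub ((hasDerivAt_pow 2 s).const_mul 3)
      refine this.congr_deriv ?_; push_cast; ring
    have := (h3.const_mul (M + 1)).add_const 1
    convert this using 1
  have hgcont : Continuous g :=
    continuous_iff_continuousAt.mpr fun s => ((hgd s).differentiableAt).continuousAt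
  have hanti : StrictAntiOn g (Set.Icc 0 1) := by
    apply strictAntiOn_of_deriv_neg (convex_Icc 0 1)
    · exact hgcont.continuousOn
    · intro x hx
      rw [interior_Icc] at hx
      rw [(hgd x).deriv]
      have h1 : 0 < M + 1 := by linarith
      have h2 : x ^ 2 < x := by nlinarith [hx.1, hx.2]
      nlinarith
  have hg0 : g 0 = 1 := by simp [hgdef]
  have hg1 : g 1 = -M := by simp [hgdef]; ring
  obtain ⟨sstar, hsmem, hgs⟩ : ∃ x ∈ Set.Ioo (0:ℝ) 1, g x = 0 := by
    have hcont : ContinuousOn g (Set.Icc 0 1) := hgcont.continuousOn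
    have := intermediate_value_Ioo' (by norm_num : (0:ℝ) ≤ 1) hcont
    have h0 : (0:ℝ) ∈ Set.Ioo (g 1) (g 0) := by
      rw [hg0, hg1]; constructor <;> [linarith; norm_num]
    obtain ⟨x, hx, hgx⟩ := this h0
    exact ⟨x, hx, hgx⟩
  have hIcc : sstar ∈ Set.Icc (0:ℝ) 1 := ⟨hsmem.1.le, hsmem.2.le⟩
  have hsignpos : ∀ s ∈ Set.Ico (0:ℝ) sstar, 0 < deriv (deriv f) s := by
    intro s hs
    rw [hf2]
    have hsIcc : s ∈ Set.Icc (0:ℝ) 1 := ⟨hs.1, le_trans hs.2.le hsmem.2.le⟩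
    have : g sstar < g s := hanti hsIcc hIcc hs.2
    rw [hgs] at this
    exact div_pos (by positivity) (pow_pos (hD s) 3)
  have hsignneg : ∀ s ∈ Set.Ioc sstar (1:ℝ), deriv (deriv f) s < 0 := by
    intro s hs
    rw [hf2]
    have hsIcc : s ∈ Set.Icc (0:ℝ) 1 := ⟨le_trans hsmem.1.le hs.1.le, hs.2⟩
    have : g s < g sstar := hanti hIcc hsIcc hs.1
    rw [hgs] at this
    exact div_neg_of_neg_of_pos (by nlinarith) (pow_pos (hD s) 3)
  refine ⟨sstar, ⟨hsmem, ?_, hsignpos, hsignneg⟩, ?_⟩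
  · rw [hf2, hgs]; simp
  · rintro t ⟨htmem, ht0, -, -⟩
    have htIcc : t ∈ Set.Icc (0:ℝ) 1 := ⟨htmem.1.le, htmem.2.le⟩
    have hgt : g t = 0 := by
      rw [hf2] at ht0
      have hDt : ((D t) ^ 3 : ℝ) ≠ 0 := pow_ne_zero 3 (hD t).ne'
      have h2M : (2 * M : ℝ) ≠ 0 := by positivity
      rcases div_eq_zero_iff.mp ht0 with h | h
      · rcases mul_eq_zero.mp h with h' | h'
        · exact absurd h' (by positivity)
        · exact h'
      · exact absurd h hDt
    exact hanti.injOn htIcc hIcc (by rw [hgt, hgs])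
end

section
/- If 0 < M ≤ 10, then for every s ∈ [0,1] one has |f′(s)(1−s)² − 2 f(s)(1−s)| ≤ 2. -/
/-- For the Buckley–Leverett fractional flow `f s = M s² / (M s² + (1-s)²)`:
if `0 < M ≤ 10` then for every `s ∈ [0,1]`, `|f'(s)(1−s)² − 2 f(s)(1−s)| ≤ 2`. -/
theorem gravity_flux_derivative_bound
    (M : ℝ) (hM0 : 0 < M) (hM10 : M ≤ 10)
    (f : ℝ → ℝ) (hf : ∀ s, f s = M * s ^ 2 / (M * s ^ 2 + (1 - s) ^ 2)) :
    ∀ s ∈ Set.Icc (0 : ℝ) 1,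
      |deriv f s * (1 - s) ^ 2 - 2 * f s * (1 - s)| ≤ 2 := by
  have hfe : f = fun x => M * x ^ 2 / (M * x ^ 2 + (1 - x) ^ 2) := funext hf
  subst hfe
  intro s hs
  obtain ⟨hs0, hs1⟩ := hs
  have ht : (0:ℝ) ≤ 1 - s := by linarith
  have hDpos : 0 < M * s ^ 2 + (1 - s) ^ 2 := by
    rcases eq_or_lt_of_le hs0 with h | h
    · simp [← h]
    · have : 0 < M * s ^ 2 := by positivity
      nlinarith [sq_nonneg (1 - s)]
  set D := M * s ^ 2 + (1 - s) ^ 2 with hD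
  have h1 : HasDerivAt (fun x : ℝ => M * x ^ 2) (M * (2 * s)) s := by
    simpa using ((hasDerivAt_pow 2 s).const_mul M)
  have h2 : HasDerivAt (fun x : ℝ => M * x ^ 2 + (1 - x) ^ 2)
      (M * (2 * s) + 2 * (1 - s) * (-1)) s := by
    have hb : HasDerivAt (fun x : ℝ => (1 - x) ^ 2) (2 * (1 - s) * (-1)) s := by
      have h0 : HasDerivAt (fun x : ℝ => 1 - x) (-1) s := by
        simpa using (hasDerivAt_id s).const_sub 1
      simpa using h0.fun_pow 2
    exact h1.add hb
  have hdiv : HasDerivAt (fun x : ℝ => M * x ^ 2 / (M * x ^ 2 + (1 - x) ^ 2))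
      ((M * (2 * s) * D - M * s ^ 2 * (M * (2 * s) + 2 * (1 - s) * (-1))) / D ^ 2) s :=
    h1.div h2 hDpos.ne'
  rw [hdiv.deriv]
  have key : (M * (2 * s) * D - M * s ^ 2 * (M * (2 * s) + 2 * (1 - s) * (-1))) / D ^ 2
        * (1 - s) ^ 2 - 2 * (M * s ^ 2 / D) * (1 - s)
      = (2 * M * s * (1 - s) * ((1 - s) ^ 3 - M * s ^ 3)) / D ^ 2 := by
    field_simp
    ring
  rw [key, abs_div, abs_of_pos (by positivity : (0:ℝ) < D ^ 2), div_le_iff₀ (by positivity)]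
  rw [abs_le]
  constructor
  · -- lower: -(2*D^2) ≤ N, i.e. 2*M*s*(1-s)*(M*s^3 - (1-s)^3) ≤ 2*D^2
    -- since M*s^2*(1-s)*(M*s^2... ) use M^2 s^4 (1-s) ≤ D^2 and M s (1-s)^4 ≥ 0
    have e1 : 0 ≤ M * s * (1 - s) ^ 4 := by positivity
    have e2 : M ^ 2 * s ^ 4 * (1 - s) ≤ D ^ 2 := by
      have : M ^ 2 * s ^ 4 * (1 - s) ≤ M ^ 2 * s ^ 4 := by nlinarith [sq_nonneg (M * s ^ 2)]
      nlinarith [sq_nonneg (1 - s), mul_nonneg (mul_nonneg hM0.le (sq_nonneg s)) (sq_nonneg (1 - s))]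
    nlinarith [e1, e2]
  · -- upper: 2*M*s*(1-s)*((1-s)^3 - M*s^3) ≤ 2*D^2
    -- reduces to q = M^2 s^4 (2-s) - M s (1-s)^2 ((1-s)^2 - 2 s) + (1-s)^4 ≥ 0
    have hq : 0 ≤ M ^ 2 * s ^ 4 * (2 - s)
        - M * (s * (1 - s) ^ 2 * ((1 - s) ^ 2 - 2 * s)) + (1 - s) ^ 4 := by
      rcases le_or_gt ((1 - s) ^ 2) (2 * s) with hc | hc
      · have : 0 ≤ M * (s * (1 - s) ^ 2 * (2 * s - (1 - s) ^ 2)) := by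
          have : (0:ℝ) ≤ 2 * s - (1 - s) ^ 2 := by linarith
          positivity
        nlinarith [mul_nonneg (mul_nonneg (sq_nonneg M) (sq_nonneg (s^2))) (by linarith : (0:ℝ) ≤ 2 - s)]
      · have hcc : (0:ℝ) ≤ (1 - s) ^ 2 - 2 * s := by linarith
        have hmono : M * (s * (1 - s) ^ 2 * ((1 - s) ^ 2 - 2 * s))
            ≤ 10 * (s * (1 - s) ^ 2 * ((1 - s) ^ 2 - 2 * s)) := by
          apply mul_le_mul_of_nonneg_right hM10
          positivity
        have hp : 10 * (s * ((1 - s) ^ 2 - 2 * s)) ≤ (1 - s) ^ 2 := by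
          nlinarith [sq_nonneg (1 - 6 * s), mul_nonneg hs0 (mul_nonneg hs0 ht), sq_nonneg s,
            mul_nonneg (mul_nonneg hs0 hs0) hs0]
        have hp2 : 10 * (s * (1 - s) ^ 2 * ((1 - s) ^ 2 - 2 * s)) ≤ (1 - s) ^ 4 := by
          nlinarith [mul_le_mul_of_nonneg_right hp (sq_nonneg (1 - s))]
        nlinarith [mul_nonneg (mul_nonneg (sq_nonneg M) (sq_nonneg (s^2))) (by linarith : (0:ℝ) ≤ 2 - s)]
    nlinarith [hq]
end

section
/- Let 0 < M ≤ 10, μ_o > 0, u ∈ ℝ, κ ≥ 0 and c ∈ ℝ, and define the scalar flux 𝔉(s) = f(s) (u + κ (1−s)² c / μ_o). Then for every s ∈ [0,1], |𝔉′(s)| ≤ |f′(s)| |u| + 2 κ |c| / μ_o. (This is the derivative bound that determines the CFL time-step restriction for the two-phase flow with gravity, with κ the permeability, c = (ρ_w − ρ_o) g ∇h, and κ(1−s)²/μ_o = κ λ_o(s) the gravitational mobility term.) -/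
private theorem key1 (M s : ℝ) (hM0 : 0 < M) (hM10 : M ≤ 10) (hs0 : 0 ≤ s) (hs1 : s ≤ 1) :
    M*s*(1-s)*((1-s)^3 - M*s^3) ≤ (M*s^2+(1-s)^2)^2 := by
  have hM2 : 0 ≤ M^2*s^4*(1-s) := by
    have := sub_nonneg.2 hs1
    positivity
  rcases le_or_gt ((1-s)^2) (4*s) with h|h
  · nlinarith [mul_nonneg (mul_nonneg (mul_nonneg hM0.le hs0) (sq_nonneg (1-s)))
      (sub_nonneg.2 h), sq_nonneg (M*s^2-(1-s)^2)]
  · have h10 : 10*s^2 ≤ (1-s)^2 := by nlinarith [sq_nonneg s, sq_nonneg (1-s)]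
    have hq : 10*s*(1-s)^2*((1-s)^2-4*s) ≤ ((1-s)^2 - 10*s^2)^2 := by
      nlinarith [sq_nonneg s, sq_nonneg (1-s), mul_nonneg hs0 (sub_nonneg.2 hs1),
        sq_nonneg (s*(1-s)), sq_nonneg (1-6*s), mul_nonneg (mul_nonneg hs0 hs0) hs0]
    have hMs : M*s^2 ≤ 10*s^2 := by nlinarith [sq_nonneg s]
    have hsq : ((1-s)^2 - 10*s^2)^2 ≤ ((1-s)^2 - M*s^2)^2 := by
      nlinarith [sq_nonneg s]
    have hpos : 0 ≤ s*(1-s)^2*((1-s)^2-4*s) :=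
      mul_nonneg (mul_nonneg hs0 (sq_nonneg _)) (by linarith)
    have hgrav : M*s*(1-s)^2*((1-s)^2-4*s) ≤ 10*s*(1-s)^2*((1-s)^2-4*s) := by
      nlinarith [mul_nonneg (by linarith : (0:ℝ) ≤ 10 - M) hpos]
    nlinarith [hgrav, hq, hsq, hM2]
private theorem key2 (M s : ℝ) (hM0 : 0 < M) (hs0 : 0 ≤ s) (hs1 : s ≤ 1) :
    M*s*(1-s)*(M*s^3 - (1-s)^3) ≤ (M*s^2+(1-s)^2)^2 := by
  nlinarith [mul_nonneg (mul_nonneg (mul_nonneg hM0.le hM0.le) (pow_nonneg hs0 4)) (sub_nonneg.2 hs1),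
    mul_nonneg (mul_nonneg hM0.le hs0) (pow_nonneg (sub_nonneg.2 hs1) 4),
    mul_nonneg (mul_nonneg hM0.le (sq_nonneg s)) (sq_nonneg (1-s)),
    mul_nonneg (mul_nonneg (mul_nonneg hM0.le hM0.le) (pow_nonneg hs0 4)) hs0]


/-- CFL derivative bound for the scalar flux with gravity. Let `0 < M ≤ 10`, `μo > 0`,
`u ∈ ℝ`, `κ ≥ 0`, `c ∈ ℝ`, and `𝔉 s = f(s)(u + κ (1−s)² c / μo)` with
`f s = M s² / (M s² + (1-s)²)`. Then for every `s ∈ [0,1]`,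
`|𝔉'(s)| ≤ |f'(s)| |u| + 2 κ |c| / μo`. -/
theorem cfl_flux_derivative_bound
    (M : ℝ) (hM0 : 0 < M) (hM10 : M ≤ 10)
    (μo : ℝ) (hμo : 0 < μo)
    (u κ c : ℝ) (hκ : 0 ≤ κ)
    (f : ℝ → ℝ) (hf : ∀ s, f s = M * s ^ 2 / (M * s ^ 2 + (1 - s) ^ 2))
    (𝔉 : ℝ → ℝ) (h𝔉 : ∀ s, 𝔉 s = f s * (u + κ * (1 - s) ^ 2 * c / μo)) :
    ∀ s ∈ Set.Icc (0 : ℝ) 1,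
      |deriv 𝔉 s| ≤ |deriv f s| * |u| + 2 * κ * |c| / μo := by
  intro s hs
  obtain ⟨hs0, hs1⟩ := hs
  have hff : f = fun x => M * x ^ 2 / (M * x ^ 2 + (1 - x) ^ 2) := funext hf
  have h𝔉f : 𝔉 = fun x => f x * (u + κ * (1 - x) ^ 2 * c / μo) := funext h𝔉
  have hDpos : ∀ x : ℝ, 0 < M * x ^ 2 + (1 - x) ^ 2 := by
    intro x
    rcases eq_or_ne x 0 with rfl | hx
    · norm_num
    · have : 0 < M * x ^ 2 := by positivity
      nlinarith [sq_nonneg (1 - x)]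
  set D : ℝ := M * s ^ 2 + (1 - s) ^ 2 with hD
  have hD0 : 0 < D := hDpos s
  -- derivative of the denominator
  have hden : HasDerivAt (fun x : ℝ => M * x ^ 2 + (1 - x) ^ 2)
      (M * (2 * s) + 2 * (1 - s) * (-1)) s := by
    have h1 : HasDerivAt (fun x : ℝ => M * x ^ 2) (M * (2 * s)) s := by
      simpa using (hasDerivAt_pow 2 s).const_mul M
    have h2 : HasDerivAt (fun x : ℝ => (1 - x) ^ 2) (2 * (1 - s) * (-1)) s := by
      have := ((hasDerivAt_id s).const_sub 1).fun_pow 2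
      simpa using this
    exact h1.add h2
  have hnum : HasDerivAt (fun x : ℝ => M * x ^ 2) (M * (2 * s)) s := by
    simpa using (hasDerivAt_pow 2 s).const_mul M
  have hfD : HasDerivAt f (2 * M * s * (1 - s) / D ^ 2) s := by
    rw [hff]
    have h := hnum.div hden hD0.ne'
    convert h using 1 <;> try rfl
    rw [hD]
    field_simp
    ring
  have hdf : deriv f s = 2 * M * s * (1 - s) / D ^ 2 := hfD.deriv
  -- derivative of the gravity factor
  have hg : HasDerivAt (fun x : ℝ => u + κ * (1 - x) ^ 2 * c / μo)
      (κ * (2 * (1 - s) * (-1)) * c / μo) s := by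
    have h2 : HasDerivAt (fun x : ℝ => (1 - x) ^ 2) (2 * (1 - s) * (-1)) s := by
      simpa using ((hasDerivAt_id s).const_sub 1).fun_pow 2
    exact (((h2.const_mul κ).mul_const c).div_const μo).const_add u
  have h𝔉D : HasDerivAt 𝔉
      (2 * M * s * (1 - s) / D ^ 2 * (u + κ * (1 - s) ^ 2 * c / μo)
        + f s * (κ * (2 * (1 - s) * (-1)) * c / μo)) s := by
    rw [h𝔉f]
    exact hfD.mul hg
  have hd𝔉 := h𝔉D.deriv
  -- split: deriv 𝔉 = A*u + R*(κ*c/μo) with A = 2Ms(1-s)/D², R = 2Ms(1-s)((1-s)³-Ms³)/D²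
  set A : ℝ := 2 * M * s * (1 - s) / D ^ 2 with hA
  set R : ℝ := 2 * M * s * (1 - s) * ((1 - s) ^ 3 - M * s ^ 3) / D ^ 2 with hR
  have hsplit : deriv 𝔉 s = A * u + R * (κ * c / μo) := by
    rw [hd𝔉, hA, hR, hf s, hD]
    field_simp
    ring
  have hRle : |R| ≤ 2 := by
    rw [hR, abs_div, abs_of_pos (by positivity : (0:ℝ) < D ^ 2), div_le_iff₀ (by positivity)]
    rw [abs_le]
    constructor
    · have := key2 M s hM0 hs0 hs1
      rw [hD]; nlinarith
    · have := key1 M s hM0 hM10 hs0 hs1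
      rw [hD]; nlinarith
  calc |deriv 𝔉 s| = |A * u + R * (κ * c / μo)| := by rw [hsplit]
    _ ≤ |A * u| + |R * (κ * c / μo)| := abs_add_le _ _
    _ = |A| * |u| + |R| * (κ * |c| / μo) := by
        have hc : |κ * c / μo| = κ * |c| / μo := by
          rw [abs_div, abs_mul, abs_of_nonneg hκ, abs_of_pos hμo]
        rw [abs_mul, abs_mul, hc]
    _ ≤ |A| * |u| + 2 * (κ * |c| / μo) := by
        have : (0:ℝ) ≤ κ * |c| / μo := by positivity
        nlinarith
    _ = |deriv f s| * |u| + 2 * κ * |c| / μo := by rw [hdf]; ring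
end
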